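/- (Schur complement computation S − R·P⁻¹·Q) Let σ_e, σ_i, γ_a, γ_h, δ_h, β_a, β_i, β_h > 0, c12 > 0, r ∈ (0,1), q ∈ (0,1), θ_l ∈ (0,1], and assume (1−r)β_a θ_l / γ_a < 1 (so that P is invertible). With P = [[−σ_e, c12, β_a θ_l, β_a θ_l], [0, −c12 − σ_e, 0, 0], [(1−r)σ_e, 0, −γ_a, c12], [0, (1−r)σ_e, 0, −c12 − γ_a]], Q = the 4×4 matrix with first row (β_i θ_l, β_i θ_l, β_h θ_l, β_h θ_l) and all other rows zero, R = the 4×4 matrix with (1,1) and (2,2) entries rσ_e and all other entries zero, and S = [[−σ_i, c12, 0, 0], [0, −c12 − σ_i, 0, 0], [qσ_i, 0, −δ_h − γ_h, c12], [0, qσ_i, 0, −c12 − δ_h − γ_h]], one has S − R·P⁻¹·Q = [[d − σ_i, c12 + d, e, e], [0, −c12 − σ_i, 0, 0], [qσ_i, 0, −δ_h − γ_h, c12], [0, qσ_i, 0, −c12 − δ_h − γ_h]], where d = β_i γ_a r θ_l / (γ_a − (1−r)β_a θ_l) and e = β_h γ_a r θ_l / (γ_a − (1−r)β_a θ_l). 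-/

import Mathlib

section SchurAux

private lemma schur_aux_PY (σe γa βa βi βh c12 r θl : ℝ)
    (hσe : σe ≠ 0) (hD : γa - (1 - r) * βa * θl ≠ 0) :
    (!![-σe, c12, βa * θl, βa * θl;
        0, -c12 - σe, 0, 0;
        (1 - r) * σe, 0, -γa, c12;
        0, (1 - r) * σe, 0, -c12 - γa] : Matrix (Fin 4) (Fin 4) ℝ) *
    !![-γa / (σe * (γa - (1 - r) * βa * θl)) * (βi * θl),
       -γa / (σe * (γa - (1 - r) * βa * θl)) * (βi * θl),
       -γa / (σe * (γa - (1 - r) * βa * θl)) * (βh * θl),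
       -γa / (σe * (γa - (1 - r) * βa * θl)) * (βh * θl);
       0, 0, 0, 0;
       -(1 - r) / (γa - (1 - r) * βa * θl) * (βi * θl),
       -(1 - r) / (γa - (1 - r) * βa * θl) * (βi * θl),
       -(1 - r) / (γa - (1 - r) * βa * θl) * (βh * θl),
       -(1 - r) / (γa - (1 - r) * βa * θl) * (βh * θl);
       0, 0, 0, 0] =
    !![βi * θl, βi * θl, βh * θl, βh * θl;
       0, 0, 0, 0; 0, 0, 0, 0; 0, 0, 0, 0] := by
  ext i j
  fin_cases i <;> fin_cases j <;>
    · simp [Matrix.mul_apply, Fin.sum_univ_four, Matrix.vecHead, Matrix.vecTail]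
      try field_simp
      try ring

private lemma schur_aux_det (σe γa βa c12 r θl : ℝ) :
    (!![-σe, c12, βa * θl, βa * θl;
        0, -c12 - σe, 0, 0;
        (1 - r) * σe, 0, -γa, c12;
        0, (1 - r) * σe, 0, -c12 - γa] : Matrix (Fin 4) (Fin 4) ℝ).det =
    (c12 + σe) * (c12 + γa) * (σe * (γa - (1 - r) * βa * θl)) := by
  rw [Matrix.det_succ_row_zero]
  simp [Fin.sum_univ_succ, Matrix.det_fin_three, Fin.succAbove]
  ring

private lemma schur_aux_final (σe σi γa γh δh βa βi βh c12 r q θl d e : ℝ)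
    (hD : γa - (1 - r) * βa * θl ≠ 0) (hσe : σe ≠ 0)
    (hd : d = βi * γa * r * θl / (γa - (1 - r) * βa * θl))
    (he : e = βh * γa * r * θl / (γa - (1 - r) * βa * θl)) :
    (!![-σi, c12, 0, 0;
        0, -c12 - σi, 0, 0;
        q * σi, 0, -δh - γh, c12;
        0, q * σi, 0, -c12 - δh - γh] : Matrix (Fin 4) (Fin 4) ℝ) -
    !![r * σe, 0, 0, 0; 0, r * σe, 0, 0; 0, 0, 0, 0; 0, 0, 0, 0] *
    !![-γa / (σe * (γa - (1 - r) * βa * θl)) * (βi * θl),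
       -γa / (σe * (γa - (1 - r) * βa * θl)) * (βi * θl),
       -γa / (σe * (γa - (1 - r) * βa * θl)) * (βh * θl),
       -γa / (σe * (γa - (1 - r) * βa * θl)) * (βh * θl);
       0, 0, 0, 0;
       -(1 - r) / (γa - (1 - r) * βa * θl) * (βi * θl),
       -(1 - r) / (γa - (1 - r) * βa * θl) * (βi * θl),
       -(1 - r) / (γa - (1 - r) * βa * θl) * (βh * θl),
       -(1 - r) / (γa - (1 - r) * βa * θl) * (βh * θl);
       0, 0, 0, 0] =
    !![d - σi, c12 + d, e, e;
       0, -c12 - σi, 0, 0;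
       q * σi, 0, -δh - γh, c12;
       0, q * σi, 0, -c12 - δh - γh] := by
  subst hd he
  ext i j
  fin_cases i <;> fin_cases j <;>
    · simp [Matrix.mul_apply, Fin.sum_univ_four, Matrix.vecHead, Matrix.vecTail]
      try field_simp
      try ring

end SchurAux

/-- **Schur complement computation `S − R·P⁻¹·Q`.** With the blocks `P, Q, R, S` of the
infected-compartment matrix `A22 = [[P, Q], [R, S]]` of the Jacobian of the 2-group
behavior model at the Group 1-only disease-free equilibrium, and assuming Condition 2
`(1−r)βa θl / γa < 1` (so that `P` is invertible), one has
`S − R·P⁻¹·Q = [[d − σi, c12 + d, e, e], [0, −c12 − σi, 0, 0], [qσi, 0, −δh − γh, c12],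
[0, qσi, 0, −c12 − δh − γh]]`, where `d = βi γa r θl / (γa − (1−r)βa θl)` and
`e = βh γa r θl / (γa − (1−r)βa θl)`. -/
theorem schur_complement_SRPQ
    (σe σi γa γh δh βa βi βh c12 r q θl : ℝ)
    (hσe : 0 < σe) (hσi : 0 < σi) (hγa : 0 < γa) (hγh : 0 < γh) (hδh : 0 < δh)
    (hβa : 0 < βa) (hβi : 0 < βi) (hβh : 0 < βh) (hc12 : 0 < c12)
    (hr : r ∈ Set.Ioo (0 : ℝ) 1) (hq : q ∈ Set.Ioo (0 : ℝ) 1)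
    (hθl : θl ∈ Set.Ioc (0 : ℝ) 1)
    (hcond2 : (1 - r) * βa * θl / γa < 1)
    (P Q R S : Matrix (Fin 4) (Fin 4) ℝ)
    (hP : P = !![-σe, c12, βa * θl, βa * θl;
                 0, -c12 - σe, 0, 0;
                 (1 - r) * σe, 0, -γa, c12;
                 0, (1 - r) * σe, 0, -c12 - γa])
    (hQ : Q = !![βi * θl, βi * θl, βh * θl, βh * θl;
                 0, 0, 0, 0;
                 0, 0, 0, 0;
                 0, 0, 0, 0])
    (hR : R = !![r * σe, 0, 0, 0;
                 0, r * σe, 0, 0;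
                 0, 0, 0, 0;
                 0, 0, 0, 0])
    (hS : S = !![-σi, c12, 0, 0;
                 0, -c12 - σi, 0, 0;
                 q * σi, 0, -δh - γh, c12;
                 0, q * σi, 0, -c12 - δh - γh])
    (d e : ℝ)
    (hd : d = βi * γa * r * θl / (γa - (1 - r) * βa * θl))
    (he : e = βh * γa * r * θl / (γa - (1 - r) * βa * θl)) :
    S - R * P⁻¹ * Q = !![d - σi, c12 + d, e, e;
                         0, -c12 - σi, 0, 0;
                         q * σi, 0, -δh - γh, c12;
                         0, q * σi, 0, -c12 - δh - γh] := by
  obtain ⟨hr0, hr1⟩ := hr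
  obtain ⟨hθ0, hθ1⟩ := hθl
  have hD : 0 < γa - (1 - r) * βa * θl := by
    have := (div_lt_one hγa).mp hcond2
    linarith
  have hD' : γa - (1 - r) * βa * θl ≠ 0 := ne_of_gt hD
  have hσe' : σe ≠ 0 := ne_of_gt hσe
  have hPY := schur_aux_PY σe γa βa βi βh c12 r θl hσe' hD'
  rw [← hP, ← hQ] at hPY
  have hunit : IsUnit P.det := by
    rw [hP, schur_aux_det]
    refine isUnit_iff_ne_zero.mpr ?_
    positivity
  have hPinvQ : P⁻¹ * Q =
      !![-γa / (σe * (γa - (1 - r) * βa * θl)) * (βi * θl),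
         -γa / (σe * (γa - (1 - r) * βa * θl)) * (βi * θl),
         -γa / (σe * (γa - (1 - r) * βa * θl)) * (βh * θl),
         -γa / (σe * (γa - (1 - r) * βa * θl)) * (βh * θl);
         0, 0, 0, 0;
         -(1 - r) / (γa - (1 - r) * βa * θl) * (βi * θl),
         -(1 - r) / (γa - (1 - r) * βa * θl) * (βi * θl),
         -(1 - r) / (γa - (1 - r) * βa * θl) * (βh * θl),
         -(1 - r) / (γa - (1 - r) * βa * θl) * (βh * θl);
         0, 0, 0, 0] := by
    rw [← hPY, ← Matrix.mul_assoc, Matrix.nonsing_inv_mul P hunit, Matrix.one_mul]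
  rw [Matrix.mul_assoc, hPinvQ, hR, hS]
  exact schur_aux_final σe σi γa γh δh βa βi βh c12 r q θl d e hD' hσe' hd he
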